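/- Under the hypotheses E_{i-1}² ≤ A_i²(e_i)·μ_{i-1}², e_{i-1}²β_{i-1}² ≤ E_{i-1}², and μ_{i-1} ≤ ((i−1)/2)β_{i-1} (with β_{i-1} > 0), the pair (e_{i-1}, e_i) satisfies the ellipse inequality e_{i-1}²·(i²/4 − 1/4) + e_i²·((i−1)²/4) ≤ (i²/4)·((i−1)²/4). -/

import Mathlib

/-- The ellipse inequality for a pair of neighboring error coefficients:
if `E_{i-1}² ≤ A_i²(e_i)·μ_{i-1}²`, `e_{i-1}²β_{i-1}² ≤ E_{i-1}²`,
`μ_{i-1} ≤ ((i−1)/2)β_{i-1}` and `|e_i| ≤ i/2`, then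
`e_{i-1}²(i²/4 − 1/4) + e_i²((i−1)²/4) ≤ (i²/4)((i−1)²/4)`. -/
theorem stmt8 (i : ℕ) (hi : 2 ≤ i) (ei eim Eim μim βim : ℝ)
    (hβim : 0 < βim) (hμim : 0 ≤ μim)
    (hei : |ei| ≤ (i : ℝ) / 2)
    (hA : Eim ^ 2 ≤ (((i : ℝ) ^ 2 / 4 - ei ^ 2) / ((i : ℝ) ^ 2 / 4 - 1 / 4)) * μim ^ 2)
    (heim : eim ^ 2 * βim ^ 2 ≤ Eim ^ 2)
    (hμβ : μim ≤ (((i : ℝ) - 1) / 2) * βim) :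
    eim ^ 2 * ((i : ℝ) ^ 2 / 4 - 1 / 4) + ei ^ 2 * (((i : ℝ) - 1) ^ 2 / 4)
      ≤ ((i : ℝ) ^ 2 / 4) * (((i : ℝ) - 1) ^ 2 / 4) := by
  have hi2 : (2 : ℝ) ≤ (i : ℝ) := by exact_mod_cast hi
  have hd : (0 : ℝ) < (i : ℝ) ^ 2 / 4 - 1 / 4 := by nlinarith
  have hnum : (0 : ℝ) ≤ (i : ℝ) ^ 2 / 4 - ei ^ 2 := by
    have := abs_nonneg ei
    have h2 : ei ^ 2 ≤ ((i : ℝ) / 2) ^ 2 := by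
      have := sq_abs ei
      nlinarith
    nlinarith
  have hμ2 : μim ^ 2 ≤ ((((i : ℝ) - 1) / 2) * βim) ^ 2 := by
    calc μim ^ 2 = μim * μim := sq μim
      _ ≤ ((((i : ℝ) - 1) / 2) * βim) * ((((i : ℝ) - 1) / 2) * βim) :=
          mul_self_le_mul_self hμim hμβ
      _ = ((((i : ℝ) - 1) / 2) * βim) ^ 2 := (sq _).symm
  have hA' : Eim ^ 2 * ((i : ℝ) ^ 2 / 4 - 1 / 4) ≤ ((i : ℝ) ^ 2 / 4 - ei ^ 2) * μim ^ 2 := by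
    rw [div_mul_eq_mul_div, le_div_iff₀ hd] at hA
    linarith
  have hchain : eim ^ 2 * βim ^ 2 * ((i : ℝ) ^ 2 / 4 - 1 / 4)
      ≤ ((i : ℝ) ^ 2 / 4 - ei ^ 2) * ((((i : ℝ) - 1) / 2) * βim) ^ 2 := by
    calc eim ^ 2 * βim ^ 2 * ((i : ℝ) ^ 2 / 4 - 1 / 4)
        ≤ Eim ^ 2 * ((i : ℝ) ^ 2 / 4 - 1 / 4) := mul_le_mul_of_nonneg_right heim hd.le
      _ ≤ ((i : ℝ) ^ 2 / 4 - ei ^ 2) * μim ^ 2 := hA'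
      _ ≤ ((i : ℝ) ^ 2 / 4 - ei ^ 2) * ((((i : ℝ) - 1) / 2) * βim) ^ 2 :=
          mul_le_mul_of_nonneg_left hμ2 hnum
  have hb2 : (0 : ℝ) < βim ^ 2 := by positivity
  have hkey : eim ^ 2 * ((i : ℝ) ^ 2 / 4 - 1 / 4)
      ≤ ((i : ℝ) ^ 2 / 4 - ei ^ 2) * (((i : ℝ) - 1) ^ 2 / 4) := by
    have h := (mul_le_mul_iff_of_pos_right hb2).mp (by linear_combination hchain :
      eim ^ 2 * ((i : ℝ) ^ 2 / 4 - 1 / 4) * βim ^ 2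
        ≤ ((i : ℝ) ^ 2 / 4 - ei ^ 2) * (((i : ℝ) - 1) ^ 2 / 4) * βim ^ 2)
    exact h
  nlinarith [hkey]
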